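/- For every k ≥ 1 and all positive integers n₁, …, n_k there exists a finite 2-qBMG G whose group Aut_I(G) of color-preserving automorphisms contains a normal subgroup isomorphic to the direct product Sym(n₁) × ⋯ × Sym(n_k) of symmetric groups of degrees n₁, …, n_k. -/

import Mathlib

/-- Two vertices are equivalent (`x ∼̇ y`) if they have the same
out-neighbors and the same in-neighbors. -/
def dotSim {V : Type*} (E : V → V → Prop) (x y : V) : Prop :=
  (∀ z, E x z ↔ E y z) ∧ (∀ z, E z x ↔ E z y)

/-- `U` and `W` are the color classes of a 2-colored digraph with edge relation `E`:
they partition the vertex set and every edge has one endpoint in each class. -/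
def IsTwoColored {V : Type*} (E : V → V → Prop) (U W : Set V) : Prop :=
  (∀ v, v ∈ U ∨ v ∈ W) ∧ (∀ v, ¬(v ∈ U ∧ v ∈ W)) ∧
    ∀ u v, E u v → (u ∈ U ∧ v ∈ W) ∨ (u ∈ W ∧ v ∈ U)

/-- Axiom (N1). -/
def AxN1 {V : Type*} (E : V → V → Prop) : Prop :=
  ∀ u v, u ≠ v → ¬E u v → ¬E v u → ∀ w t, ¬(E u t ∧ E v w ∧ E t w)

/-- Axiom (N2): bi-transitivity. -/
def AxN2 {V : Type*} (E : V → V → Prop) : Prop :=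
  ∀ u v w t, E u v → E v w → E w t → E u t

/-- Axiom (N3). -/
def AxN3 {V : Type*} (E : V → V → Prop) : Prop :=
  ∀ u v w, E u w → E v w → (∀ z, E u z → E v z) ∨ (∀ z, E v z → E u z)

/-- A 2-qBMG: an irreflexive 2-colored digraph satisfying (N1), (N2), (N3). -/
def IsQBMG {V : Type*} (E : V → V → Prop) (U W : Set V) : Prop :=
  (∀ v, ¬E v v) ∧ IsTwoColored E U W ∧ AxN1 E ∧ AxN2 E ∧ AxN3 E

/-- An automorphism of the digraph: a permutation mapping edges to edges. -/
def IsAut {V : Type*} (E : V → V → Prop) (π : Equiv.Perm V) : Prop :=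
  ∀ u v, E u v → E (π u) (π v)

/-- A color-preserving automorphism of the 2-colored digraph. -/
def IsAutI {V : Type*} (E : V → V → Prop) (U W : Set V) (π : Equiv.Perm V) : Prop :=
  IsAut E π ∧ (∀ v ∈ U, π v ∈ U) ∧ (∀ v ∈ W, π v ∈ W)

namespace Stmt7

variable {k : ℕ} (n : Fin k → ℕ)

/-- Vertex set: `k` blocks of sizes `n i`, plus one marker per block. -/
abbrev Vt : Type := (Σ i : Fin k, Fin (n i)) ⊕ Fin k

/-- Edge relation: every vertex of block `i` points to marker `i`. -/
def Ed : Vt n → Vt n → Prop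
  | Sum.inl x, Sum.inr j => x.1 = j
  | _, _ => False

/-- The product of symmetric groups acting blockwise, fixing all markers. -/
def φ : (∀ i : Fin k, Equiv.Perm (Fin (n i))) →* Equiv.Perm (Vt n) :=
  (Equiv.Perm.sumCongrHom _ _).comp
    ((Equiv.Perm.sigmaCongrRightHom fun i => Fin (n i)).prod 1)

lemma φ_inl (σ : ∀ i : Fin k, Equiv.Perm (Fin (n i))) (x : Σ i : Fin k, Fin (n i)) :
    φ n σ (Sum.inl x) = Sum.inl ⟨x.1, σ x.1 x.2⟩ := rfl

lemma φ_inr (σ : ∀ i : Fin k, Equiv.Perm (Fin (n i))) (j : Fin k) :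
    φ n σ (Sum.inr j) = Sum.inr j := rfl

lemma φ_injective : Function.Injective (φ n) := by
  intro σ τ h
  funext i
  apply Equiv.ext
  intro a
  have := congrArg (fun e : Equiv.Perm (Vt n) => e (Sum.inl ⟨i, a⟩)) h
  simp only [φ_inl, Sum.inl.injEq, Sigma.mk.inj_iff, heq_eq_eq, true_and] at this
  exact this

lemma mem_range_iff (h : Equiv.Perm (Vt n)) :
    h ∈ (φ n).range ↔
      (∀ j : Fin k, h (Sum.inr j) = Sum.inr j) ∧
      (∀ (i : Fin k) (a : Fin (n i)), ∃ b : Fin (n i),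
        h (Sum.inl ⟨i, a⟩) = Sum.inl ⟨i, b⟩) := by
  constructor
  · rintro ⟨σ, rfl⟩
    exact ⟨fun j => rfl, fun i a => ⟨σ i a, rfl⟩⟩
  · rintro ⟨hW, hU⟩
    choose f hfspec using hU
    have hinj : ∀ i, Function.Injective (f i) := by
      intro i a a' hee
      have h1 : h (Sum.inl ⟨i, a⟩) = h (Sum.inl ⟨i, a'⟩) := by
        rw [hfspec, hfspec, hee]
      have := h.injective h1
      simpa using this
    refine ⟨fun i => Equiv.ofBijective (f i)
      ((Fintype.bijective_iff_injective_and_card _).mpr ⟨hinj i, rfl⟩), ?_⟩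
    apply Equiv.ext
    intro v
    rcases v with ⟨i, a⟩ | j
    · rw [φ_inl]
      simp only [Equiv.ofBijective_apply]
      exact (hfspec i a).symm
    · rw [φ_inr]
      exact (hW j).symm

end Stmt7

/-- For every `k ≥ 1` and all positive integers `n 0, …, n (k-1)`
there is a finite 2-qBMG `G` whose group of color-preserving automorphisms contains a
normal subgroup isomorphic to `Sym(n 0) × ⋯ × Sym(n (k-1))`; "normal in `Aut_I(G)`"
is expressed by closure under conjugation by every color-preserving automorphism. -/
theorem stmt_7 (k : ℕ) (hk : 1 ≤ k) (n : Fin k → ℕ) (hn : ∀ i, 1 ≤ n i) :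
    ∃ (V : Type) (_ : Fintype V) (_ : DecidableEq V)
      (E : V → V → Prop) (U W : Set V),
      IsQBMG E U W ∧
        ∃ N : Subgroup (Equiv.Perm V),
          (∀ π ∈ N, IsAutI E U W π) ∧
          (∀ g : Equiv.Perm V, IsAutI E U W g → ∀ π ∈ N, g * π * g⁻¹ ∈ N) ∧
          Nonempty (N ≃* ∀ i : Fin k, Equiv.Perm (Fin (n i))) := by
  classical
  refine ⟨Stmt7.Vt n, inferInstance, inferInstance, Stmt7.Ed n,
    Set.range Sum.inl, Set.range Sum.inr, ?_, (Stmt7.φ n).range, ?_, ?_, ?_⟩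
  · refine ⟨?_, ⟨?_, ?_, ?_⟩, ?_, ?_, ?_⟩
    · rintro (x | j) h <;> exact h
    · rintro (x | j)
      · exact Or.inl ⟨x, rfl⟩
      · exact Or.inr ⟨j, rfl⟩
    · rintro v ⟨⟨x, hx⟩, ⟨j, hj⟩⟩
      rw [← hx] at hj
      exact Sum.inl_ne_inr hj.symm
    · rintro (x | x) (y | y) h
      · exact h.elim
      · exact Or.inl ⟨⟨x, rfl⟩, ⟨y, rfl⟩⟩
      · exact h.elim
      · exact h.elim
    · rintro u v _ _ _ w t ⟨h1, h2, h3⟩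
      rcases t with x | j
      · rcases u with y | y <;> exact h1
      · rcases w with y | y <;> exact h3
    · rintro u v w t h1 h2 _
      rcases v with x | j
      · rcases u with y | y <;> exact h1.elim
      · rcases w with y | y <;> exact h2.elim
    · rintro u v w h1 h2
      rcases w with x | j
      · rcases u with y | y <;> exact h1.elim
      · rcases u with x | x
        · rcases v with y | y
          · refine Or.inl ?_
            rintro (z | z) hz
            · exact hz.elim
            · show y.1 = z
              rw [h2, ← h1]
              exact hz
          · exact h2.elim
        · exact h1.elim
  · rintro π ⟨σ, rfl⟩
    refine ⟨?_, ?_, ?_⟩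
    · rintro (x | x) (y | y) h <;> exact h
    · rintro v ⟨x, rfl⟩
      exact ⟨⟨x.1, σ x.1 x.2⟩, rfl⟩
    · rintro v ⟨j, rfl⟩
      exact ⟨j, rfl⟩
  · rintro g ⟨hgE, hgU, hgW⟩ π hπ
    rw [Stmt7.mem_range_iff] at hπ ⊢
    obtain ⟨hπW, hπU⟩ := hπ
    have hU' : ∀ x : Σ i : Fin k, Fin (n i), ∃ y, g (Sum.inl x) = Sum.inl y := by
      intro x
      rcases hgU (Sum.inl x) ⟨x, rfl⟩ with ⟨y, hy⟩
      exact ⟨y, hy.symm⟩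
    have hW' : ∀ j : Fin k, ∃ m, g (Sum.inr j) = Sum.inr m := by
      intro j
      rcases hgW (Sum.inr j) ⟨j, rfl⟩ with ⟨m, hm⟩
      exact ⟨m, hm.symm⟩
    have hgiW : ∀ j : Fin k, ∃ m, g⁻¹ (Sum.inr j) = Sum.inr m := by
      intro j
      rcases hv : g⁻¹ (Sum.inr j) with x | m
      · obtain ⟨y, hy⟩ := hU' x
        have : g (g⁻¹ (Sum.inr j)) = Sum.inl y := by rw [hv]; exact hy
        rw [Equiv.Perm.coe_inv, Equiv.apply_symm_apply] at this
        exact absurd this.symm (Sum.inl_ne_inr)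
      · exact ⟨m, rfl⟩
    have hgiU : ∀ x : Σ i : Fin k, Fin (n i), ∃ y, g⁻¹ (Sum.inl x) = Sum.inl y := by
      intro x
      rcases hv : g⁻¹ (Sum.inl x) with y | m
      · exact ⟨y, rfl⟩
      · obtain ⟨m', hm'⟩ := hW' m
        have : g (g⁻¹ (Sum.inl x)) = Sum.inr m' := by rw [hv]; exact hm'
        rw [Equiv.Perm.coe_inv, Equiv.apply_symm_apply] at this
        exact absurd this Sum.inl_ne_inr
    constructor
    · intro j
      obtain ⟨m, hm⟩ := hgiW j
      simp only [Equiv.Perm.mul_apply]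
      rw [hm, hπW m, ← hm, Equiv.Perm.coe_inv, Equiv.apply_symm_apply]
    · intro i a
      simp only [Equiv.Perm.mul_apply]
      obtain ⟨⟨j, c⟩, hjc⟩ := hgiU ⟨i, a⟩
      rw [hjc]
      obtain ⟨b0, hb0⟩ := hπU j c
      rw [hb0]
      obtain ⟨m, hm⟩ := hW' j
      have key : ∀ d : Fin (n j), ∀ z : Σ i : Fin k, Fin (n i),
          g (Sum.inl ⟨j, d⟩) = Sum.inl z → z.1 = m := by
        intro d z hz
        have he : Stmt7.Ed n (Sum.inl ⟨j, d⟩) (Sum.inr j) := rfl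
        have h2 := hgE _ _ he
        rw [hz, hm] at h2
        exact h2
      have hgi : g (Sum.inl ⟨j, c⟩) = Sum.inl ⟨i, a⟩ := by
        rw [← hjc]; exact Equiv.apply_symm_apply g _
      have hmi : m = i := (key c ⟨i, a⟩ hgi).symm
      obtain ⟨⟨i', b⟩, hy⟩ := hU' ⟨j, b0⟩
      have hy1 : i' = i := by rw [← hmi]; exact key b0 ⟨i', b⟩ hy
      subst hy1
      exact ⟨b, hy⟩
  · exact ⟨(MonoidHom.ofInjective (Stmt7.φ_injective n)).symm⟩
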